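/- Let G be a simple graph of Class 2 with a critical edge e1 = y0 y1, let φ ∈ C^Δ(G − e1), and let K = (y0, e1, y1, e2, y2, e3, y3) be a Kierstead path with respect to e1 and φ. Then |φ̄(y3) ∩ (φ̄(y0) ∪ φ̄(y1))| ≤ 1. -/

import Mathlib

/-- A proper `k`-edge-coloring of `G` with colors from `{1, …, k}`: every edge of `G`
receives a color in `{1, …, k}` and distinct edges sharing a vertex get distinct colors. -/
def IsProperEdgeColoring {V : Type*} (G : SimpleGraph V) (k : ℕ) (φ : Sym2 V → ℕ) : Prop :=
  (∀ e ∈ G.edgeSet, φ e ∈ Finset.Icc 1 k) ∧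
    ∀ e₁ ∈ G.edgeSet, ∀ e₂ ∈ G.edgeSet, e₁ ≠ e₂ → (∃ v, v ∈ e₁ ∧ v ∈ e₂) → φ e₁ ≠ φ e₂

/-- The chromatic index `χ'(G)`: the least `k` such that `G` has a proper `k`-edge-coloring. -/
noncomputable def chromIndex {V : Type*} (G : SimpleGraph V) : ℕ :=
  sInf {k | ∃ φ : Sym2 V → ℕ, IsProperEdgeColoring G k φ}

/-- The set `φ̄(u)` of colors of `{1, …, k}` missing at `u`, i.e. not used by `φ` on
any edge of `G` incident with `u`. -/
def missing {V : Type*} (G : SimpleGraph V) (k : ℕ) (φ : Sym2 V → ℕ) (u : V) : Set ℕ :=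
  {c | c ∈ Finset.Icc 1 k ∧ ∀ v, G.Adj u v → φ s(u, v) ≠ c}

set_option linter.unusedSectionVars false

namespace KP

variable {V : Type*}

/-- color swap function -/
def sw (c d n : ℕ) : ℕ := if n = c then d else if n = d then c else n

lemma sw_c (c d : ℕ) : sw c d c = d := by simp [sw]

lemma sw_d (c d : ℕ) : sw c d d = c := by
  by_cases h : d = c <;> simp [sw, h]

lemma sw_other {c d n : ℕ} (h1 : n ≠ c) (h2 : n ≠ d) : sw c d n = n := by
  simp [sw, h1, h2]

lemma sw_invol (c d n : ℕ) : sw c d (sw c d n) = n := by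
  by_cases h1 : n = c
  · subst h1; rw [sw_c, sw_d]
  · by_cases h2 : n = d
    · subst h2; rw [sw_d, sw_c]
    · rw [sw_other h1 h2, sw_other h1 h2]

lemma sw_inj {c d a b : ℕ} (h : sw c d a = sw c d b) : a = b := by
  have := congrArg (sw c d) h
  rwa [sw_invol, sw_invol] at this

lemma sw_cases (c d n : ℕ) : sw c d n = n ∨ sw c d n = c ∨ sw c d n = d := by
  unfold sw; split_ifs <;> tauto

lemma sw_mem_pair {c d n : ℕ} (h : n = c ∨ n = d) : sw c d n = c ∨ sw c d n = d := by
  rcases h with h | h <;> subst h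
  · rw [sw_c]; tauto
  · rw [sw_d]; tauto

lemma sw_not_mem_pair {c d n : ℕ} (h1 : n ≠ c) (h2 : n ≠ d) :
    sw c d n ≠ c ∧ sw c d n ≠ d := by rw [sw_other h1 h2]; exact ⟨h1, h2⟩

/-- The graph of edges colored `c` or `d`. -/
def kG (G : SimpleGraph V) (ψ : Sym2 V → ℕ) (c d : ℕ) : SimpleGraph V where
  Adj x y := G.Adj x y ∧ (ψ s(x, y) = c ∨ ψ s(x, y) = d)
  symm := by
    constructor
    intro x y ⟨h1, h2⟩
    refine ⟨h1.symm, ?_⟩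
    rwa [Sym2.eq_swap]
  loopless := by constructor; intro x ⟨h, _⟩; exact G.irrefl h

lemma kG_adj {G : SimpleGraph V} {ψ : Sym2 V → ℕ} {c d : ℕ} {x y : V} :
    (kG G ψ c d).Adj x y ↔ G.Adj x y ∧ (ψ s(x, y) = c ∨ ψ s(x, y) = d) := Iff.rfl

/-- The condition that an edge gets swapped: it is a `c/d`-edge whose component contains `u`. -/
def swCond (G : SimpleGraph V) (ψ : Sym2 V → ℕ) (c d : ℕ) (u : V) (e : Sym2 V) : Prop :=
  ∃ x y, e = s(x, y) ∧ (kG G ψ c d).Adj x y ∧ (kG G ψ c d).Reachable u x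

open Classical in
/-- Swap colors `c`, `d` on the Kempe component of `u`. -/
noncomputable def swapped (G : SimpleGraph V) (ψ : Sym2 V → ℕ) (c d : ℕ) (u : V) :
    Sym2 V → ℕ :=
  fun e => if swCond G ψ c d u e then sw c d (ψ e) else ψ e

variable {G : SimpleGraph V} {ψ : Sym2 V → ℕ} {c d : ℕ} {u : V}

lemma swCond_color (h : swCond G ψ c d u e) : ψ e = c ∨ ψ e = d := by
  obtain ⟨x, y, rfl, hadj, -⟩ := h
  exact hadj.2

lemma swapped_of_cond {e : Sym2 V} (h : swCond G ψ c d u e) :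
    swapped G ψ c d u e = sw c d (ψ e) := by
  simp [swapped, h]

lemma swapped_of_not_cond {e : Sym2 V} (h : ¬ swCond G ψ c d u e) :
    swapped G ψ c d u e = ψ e := by
  simp [swapped, h]

lemma swapped_of_color_notin {e : Sym2 V} (h1 : ψ e ≠ c) (h2 : ψ e ≠ d) :
    swapped G ψ c d u e = ψ e := by
  apply swapped_of_not_cond
  intro h
  rcases swCond_color h with h' | h' <;> tauto

lemma swCond_of {x y : V} (hadj : G.Adj x y) (hcol : ψ s(x, y) = c ∨ ψ s(x, y) = d)
    (hr : (kG G ψ c d).Reachable u x) : swCond G ψ c d u s(x, y) :=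
  ⟨x, y, rfl, ⟨hadj, hcol⟩, hr⟩

lemma swCond_endpoint_reach {x y : V} (h : swCond G ψ c d u s(x, y)) :
    (kG G ψ c d).Reachable u x := by
  obtain ⟨x', y', he, hadj, hr⟩ := h
  rcases Sym2.eq_iff.1 he with ⟨rfl, rfl⟩ | ⟨rfl, rfl⟩
  · exact hr
  · exact hr.trans hadj.reachable

lemma swapped_of_not_reach {x y : V} (h : ¬ (kG G ψ c d).Reachable u x) :
    swapped G ψ c d u s(x, y) = ψ s(x, y) := by
  apply swapped_of_not_cond
  intro hc
  exact h (swCond_endpoint_reach hc)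

end KP

namespace KP
variable {V : Type*} {G : SimpleGraph V} {ψ : Sym2 V → ℕ} {c d k : ℕ} {u : V}

lemma swapped_proper (hp : IsProperEdgeColoring G k ψ)
    (hc : c ∈ Finset.Icc 1 k) (hd : d ∈ Finset.Icc 1 k) :
    IsProperEdgeColoring G k (swapped G ψ c d u) := by
  obtain ⟨hRange, hDist⟩ := hp
  constructor
  · intro e he
    by_cases h : swCond G ψ c d u e
    · rw [swapped_of_cond h]
      rcases sw_cases c d (ψ e) with h' | h' | h' <;> rw [h']
      · exact hRange e he
      · exact hc
      · exact hd
    · rw [swapped_of_not_cond h]; exact hRange e he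
  · -- distinctness
    have mixed : ∀ e₁ ∈ G.edgeSet, ∀ e₂ ∈ G.edgeSet, e₁ ≠ e₂ → (∃ v, v ∈ e₁ ∧ v ∈ e₂) →
        swCond G ψ c d u e₁ → ¬ swCond G ψ c d u e₂ →
        swapped G ψ c d u e₁ ≠ swapped G ψ c d u e₂ := by
      intro e₁ he₁ e₂ he₂ hne ⟨v, hv₁, hv₂⟩ h1 h2
      rw [swapped_of_cond h1, swapped_of_not_cond h2]
      -- v is reachable from u
      have hvreach : (kG G ψ c d).Reachable u v := by
        obtain ⟨x, y, he, hadj, hr⟩ := h1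
        have hry : (kG G ψ c d).Reachable u y := hr.trans hadj.reachable
        subst he
        rcases Sym2.mem_iff.1 hv₁ with rfl | rfl
        · exact hr
        · exact hry
      -- e₂'s color is not c or d
      obtain ⟨w, rfl⟩ := Sym2.mem_iff_exists.1 hv₂
      have hadj₂ : G.Adj v w := (SimpleGraph.mem_edgeSet G).1 he₂
      have hcol₂ : ψ s(v, w) ≠ c ∧ ψ s(v, w) ≠ d := by
        constructor <;> intro h <;> exact h2 (swCond_of hadj₂ (by tauto) hvreach)
      have h1col := swCond_color h1
      have := sw_mem_pair (c := c) (d := d) h1col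
      rcases this with h' | h' <;> rw [h'] <;> tauto
    intro e₁ he₁ e₂ he₂ hne hshare
    by_cases h1 : swCond G ψ c d u e₁ <;> by_cases h2 : swCond G ψ c d u e₂
    · rw [swapped_of_cond h1, swapped_of_cond h2]
      intro h
      exact hDist e₁ he₁ e₂ he₂ hne hshare (sw_inj h)
    · exact mixed e₁ he₁ e₂ he₂ hne hshare h1 h2
    · obtain ⟨v, hv₁, hv₂⟩ := hshare
      exact (mixed e₂ he₂ e₁ he₁ hne.symm ⟨v, hv₂, hv₁⟩ h2 h1).symm
    · rw [swapped_of_not_cond h1, swapped_of_not_cond h2]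
      exact hDist e₁ he₁ e₂ he₂ hne hshare

/-- Missing sets are unchanged at vertices not in the swapped component. -/
lemma missing_swapped_of_not_reach {v : V} (h : ¬ (kG G ψ c d).Reachable u v) :
    missing G k (swapped G ψ c d u) v = missing G k ψ v := by
  have key : ∀ w, G.Adj v w → swapped G ψ c d u s(v, w) = ψ s(v, w) := by
    intro w hw
    exact swapped_of_not_reach h
  unfold missing
  ext col
  simp only [Set.mem_setOf_eq]
  constructor <;> rintro ⟨h1, h2⟩ <;> refine ⟨h1, fun w hw => ?_⟩
  · rw [← key w hw]; exact h2 w hw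
  · rw [key w hw]; exact h2 w hw

/-- At vertices in the swapped component, a missing color maps to its swap. -/
lemma missing_swapped_of_reach {v : V} {col : ℕ} (hr : (kG G ψ c d).Reachable u v)
    (hc : c ∈ Finset.Icc 1 k) (hd : d ∈ Finset.Icc 1 k)
    (hcol : col ∈ missing G k ψ v) :
    sw c d col ∈ missing G k (swapped G ψ c d u) v := by
  obtain ⟨hIcc, hmiss⟩ := hcol
  constructor
  · rcases sw_cases c d col with h | h | h <;> rw [h] <;> assumption
  · intro w hw
    by_cases hcw : ψ s(v, w) = c ∨ ψ s(v, w) = d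
    · rw [swapped_of_cond (swCond_of hw hcw hr)]
      intro h
      exact hmiss w hw (sw_inj h)
    · push_neg at hcw
      rw [swapped_of_color_notin hcw.1 hcw.2]
      rcases sw_cases c d col with h | h | h <;> rw [h]
      · exact hmiss w hw
      · exact hcw.1
      · exact hcw.2

/-- Missing colors outside `{c,d}` are preserved even at swapped vertices. -/
lemma missing_swapped_of_reach' {v : V} {col : ℕ} (hr : (kG G ψ c d).Reachable u v)
    (hc : c ∈ Finset.Icc 1 k) (hd : d ∈ Finset.Icc 1 k)
    (h1 : col ≠ c) (h2 : col ≠ d) (hcol : col ∈ missing G k ψ v) :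
    col ∈ missing G k (swapped G ψ c d u) v := by
  have := missing_swapped_of_reach hr hc hd hcol
  rwa [sw_other h1 h2] at this

end KP

namespace KP
variable {V : Type*}

/-- At most one neighbor. -/
def NbrSub (H : SimpleGraph V) (x : V) : Prop := ∀ u v, H.Adj x u → H.Adj x v → u = v

/-- Max degree at most two, relationally. -/
def Deg2 (H : SimpleGraph V) : Prop :=
  ∀ w u v t, H.Adj w u → H.Adj w v → H.Adj w t → u = v ∨ u = t ∨ v = t

lemma walk_prefix (n : ℕ) :
    ∀ (H : SimpleGraph V) (x y z : V) (p : H.Walk x y) (q : H.Walk x z),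
      p.length ≤ n → p.IsPath → q.IsPath → NbrSub H x → Deg2 H →
      y ∈ q.support ∨ z ∈ p.support := by
  induction n with
  | zero =>
    intro H x y z p q hlen hp hq hsub hmax
    cases p with
    | nil => exact Or.inl q.start_mem_support
    | cons h p' => simp [SimpleGraph.Walk.length_cons] at hlen
  | succ n ih =>
    intro H x y z p q hlen hp hq hsub hmax
    cases p with
    | nil => exact Or.inl q.start_mem_support
    | @cons _ a _ hxa p' =>
      cases q with
      | nil => exact Or.inr (SimpleGraph.Walk.start_mem_support _)
      | @cons _ b _ hxb q' =>
        have hab : a = b := hsub _ _ hxa hxb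
        subst hab
        have hxp' : x ∉ p'.support := ((SimpleGraph.Walk.cons_isPath_iff _ _).1 hp).2
        have hxq' : x ∉ q'.support := ((SimpleGraph.Walk.cons_isPath_iff _ _).1 hq).2
        set H' := H.deleteEdges {s(x, a)} with hH'
        have hpe : ∀ e ∈ p'.edges, e ∈ H'.edgeSet := by
          intro e he
          rw [SimpleGraph.edgeSet_deleteEdges]
          refine ⟨p'.edges_subset_edgeSet he, ?_⟩
          intro hes
          rw [Set.mem_singleton_iff] at hes
          subst hes
          exact hxp' (SimpleGraph.Walk.fst_mem_support_of_mem_edges p' he)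
        have hqe : ∀ e ∈ q'.edges, e ∈ H'.edgeSet := by
          intro e he
          rw [SimpleGraph.edgeSet_deleteEdges]
          refine ⟨q'.edges_subset_edgeSet he, ?_⟩
          intro hes
          rw [Set.mem_singleton_iff] at hes
          subst hes
          exact hxq' (SimpleGraph.Walk.fst_mem_support_of_mem_edges q' he)
        have hsub' : NbrSub H' a := by
          intro u v hu hv
          rw [hH', SimpleGraph.deleteEdges_adj] at hu hv
          have hux : u ≠ x := by
            intro h; subst h
            exact hu.2 (by rw [Sym2.eq_swap]; rfl)
          have hvx : v ≠ x := by
            intro h; subst h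
            exact hv.2 (by rw [Sym2.eq_swap]; rfl)
          rcases hmax a u v x hu.1 hv.1 hxa.symm with h | h | h
          · exact h
          · exact absurd h hux
          · exact absurd h hvx
        have hmax' : Deg2 H' := by
          intro w u v t hu hv ht
          rw [hH', SimpleGraph.deleteEdges_adj] at hu hv ht
          exact hmax w u v t hu.1 hv.1 ht.1
        have hlen' : (p'.transfer H' hpe).length ≤ n := by
          rw [SimpleGraph.Walk.length_transfer]
          have := hlen
          simp only [SimpleGraph.Walk.length_cons] at this
          omega
        have := ih H' a y z (p'.transfer H' hpe) (q'.transfer H' hqe) hlen'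
          (((SimpleGraph.Walk.cons_isPath_iff _ _).1 hp).1.transfer hpe)
          (((SimpleGraph.Walk.cons_isPath_iff _ _).1 hq).1.transfer hqe)
          hsub' hmax'
        rw [SimpleGraph.Walk.support_transfer, SimpleGraph.Walk.support_transfer] at this
        rcases this with h | h
        · exact Or.inl (by simp [SimpleGraph.Walk.support_cons, h])
        · exact Or.inr (by simp [SimpleGraph.Walk.support_cons, h])

lemma path_interior {H : SimpleGraph V} :
    ∀ {x z : V} (q : H.Walk x z), q.IsPath → ∀ y, y ∈ q.support → y ≠ x → y ≠ z →
      ∃ u v, u ≠ v ∧ H.Adj y u ∧ H.Adj y v := by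
  intro x z q
  induction q with
  | nil =>
    intro hq y hy hy1 hy2
    simp [SimpleGraph.Walk.support_nil] at hy
    exact absurd hy hy1
  | @cons x b z h q' ih =>
    intro hq y hy hy1 hy2
    rw [SimpleGraph.Walk.support_cons, List.mem_cons] at hy
    rcases hy with rfl | hy
    · exact absurd rfl hy1
    · by_cases hyb : y = b
      · subst hyb
        cases q' with
        | nil => exact absurd rfl hy2
        | @cons _ c2 _ h2 q'' =>
          refine ⟨x, c2, ?_, h.symm, h2⟩
          intro hxc
          have hx : x ∉ (SimpleGraph.Walk.cons h2 q'').support :=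
            ((SimpleGraph.Walk.cons_isPath_iff _ _).1 hq).2
          have hc : c2 ∈ (SimpleGraph.Walk.cons h2 q'').support := by
            rw [SimpleGraph.Walk.support_cons]
            exact List.mem_cons_of_mem _ q''.start_mem_support
          exact hx (hxc ▸ hc)
      · exact ih ((SimpleGraph.Walk.cons_isPath_iff _ _).1 hq).1 y hy hyb hy2

/-- Three distinct "pendant" vertices cannot lie in a common component of a
max-degree-2 graph. -/
lemma three_pendant {H : SimpleGraph V} [DecidableEq V] (hmax : Deg2 H) {x y z : V}
    (hx : NbrSub H x) (hy : NbrSub H y) (hz : NbrSub H z)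
    (hxy : x ≠ y) (hxz : x ≠ z) (hyz : y ≠ z)
    (hrxy : H.Reachable x y) (hrxz : H.Reachable x z) : False := by
  obtain ⟨p0⟩ := hrxy
  obtain ⟨q0⟩ := hrxz
  set p := p0.bypass with hp0
  set q := q0.bypass with hq0
  have hp : p.IsPath := p0.bypass_isPath
  have hq : q.IsPath := q0.bypass_isPath
  rcases walk_prefix p.length H x y z p q le_rfl hp hq hx hmax with h | h
  · obtain ⟨u, v, huv, h1, h2⟩ := path_interior q hq y h (Ne.symm hxy) hyz
    exact huv (hy u v h1 h2)
  · obtain ⟨u, v, huv, h1, h2⟩ := path_interior p hp z h (Ne.symm hxz) (Ne.symm hyz)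
    exact huv (hz u v h1 h2)

end KP

namespace KP
variable {V : Type*} {G : SimpleGraph V} {ψ : Sym2 V → ℕ} {c d k : ℕ}

lemma mem_edgeSet_of_adj {x y : V} (h : G.Adj x y) : s(x, y) ∈ G.edgeSet :=
  (SimpleGraph.mem_edgeSet G).2 h

lemma proper_ne (hp : IsProperEdgeColoring G k ψ) {x u w : V}
    (h1 : G.Adj x u) (h2 : G.Adj x w) (huw : u ≠ w) : ψ s(x, u) ≠ ψ s(x, w) := by
  refine hp.2 _ (mem_edgeSet_of_adj h1) _ (mem_edgeSet_of_adj h2) ?_ ⟨x, ?_, ?_⟩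
  · intro h
    exact huw (Sym2.congr_right.1 h)
  · simp
  · simp

lemma deg2_kG (hp : IsProperEdgeColoring G k ψ) : Deg2 (kG G ψ c d) := by
  intro w u v t hu hv ht
  by_contra hcon
  push_neg at hcon
  obtain ⟨huv, hut, hvt⟩ := hcon
  have h1 := proper_ne hp hu.1 hv.1 huv
  have h2 := proper_ne hp hu.1 ht.1 hut
  have h3 := proper_ne hp hv.1 ht.1 hvt
  rcases hu.2 with h | h <;> rcases hv.2 with h' | h' <;> rcases ht.2 with h'' | h'' <;>
    simp [h, h', h''] at h1 h2 h3

lemma nbrSub_missing (hp : IsProperEdgeColoring G k ψ) {v : V} {m : ℕ}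
    (hm : ∀ w, G.Adj v w → ψ s(v, w) ≠ m) (hmcd : m = c ∨ m = d) :
    NbrSub (kG G ψ c d) v := by
  intro u w hu hw
  by_contra huw
  have h1 := proper_ne hp hu.1 hw.1 huw
  have hmu := hm u hu.1
  have hmw := hm w hw.1
  rcases hmcd with rfl | rfl <;> rcases hu.2 with h | h <;> rcases hw.2 with h' | h' <;>
    simp_all

end KP

namespace KP

variable {V : Type*} [Fintype V] [DecidableEq V]

/-- Abstract setup: `GG` is the graph `G - e₁`, with the extension property
(no color missing at both `y0` and `y1`) and a nonempty missing set at `y1`. -/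
structure Setup (GG : SimpleGraph V) (k : ℕ) (y0 y1 y2 y3 : V) : Prop where
  d01 : y0 ≠ y1
  d02 : y0 ≠ y2
  d03 : y0 ≠ y3
  d12 : y1 ≠ y2
  d13 : y1 ≠ y3
  d23 : y2 ≠ y3
  a12 : GG.Adj y1 y2
  a23 : GG.Adj y2 y3
  hext : ∀ ψ : Sym2 V → ℕ, IsProperEdgeColoring GG k ψ →
    ∀ c, c ∈ missing GG k ψ y0 → c ∈ missing GG k ψ y1 → False
  hne1 : ∀ ψ : Sym2 V → ℕ, IsProperEdgeColoring GG k ψ → ∃ δ, δ ∈ missing GG k ψ y1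

variable {GG : SimpleGraph V} {k : ℕ} {y0 y1 y2 y3 : V} {ψ : Sym2 V → ℕ} {c d : ℕ}

/-- Colors missing at `y0` and `y1` are distinct. -/
lemma ne01 (S : Setup GG k y0 y1 y2 y3) (hp : IsProperEdgeColoring GG k ψ)
    (hc : c ∈ missing GG k ψ y0) (hd : d ∈ missing GG k ψ y1) : c ≠ d := by
  intro h
  exact S.hext ψ hp c hc (h ▸ hd)

/-- A color missing at `y1` differs from `ψ(e₂)`. -/
lemma presentE2 (S : Setup GG k y0 y1 y2 y3) {m : ℕ} (hm : m ∈ missing GG k ψ y1) :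
    ψ s(y1, y2) ≠ m := hm.2 y2 S.a12

/-- A color missing at `y3` differs from `ψ(e₃)`. -/
lemma presentE3 (S : Setup GG k y0 y1 y2 y3) {m : ℕ} (hm : m ∈ missing GG k ψ y3) :
    ψ s(y2, y3) ≠ m := by
  have := hm.2 y2 S.a23.symm
  rwa [Sym2.eq_swap] at this

/-- `ψ(e₂) ≠ ψ(e₃)`. -/
lemma e2_ne_e3 (S : Setup GG k y0 y1 y2 y3) (hp : IsProperEdgeColoring GG k ψ) :
    ψ s(y1, y2) ≠ ψ s(y2, y3) := by
  have h := proper_ne hp S.a12.symm S.a23 S.d13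
  rw [Sym2.eq_swap] at h
  exact h

/-- Kempe chain fact: the `(c,d)`-chain through `y0` contains `y1`,
when `c ∈ missing(y0)`, `d ∈ missing(y1)`. -/
lemma factP (S : Setup GG k y0 y1 y2 y3) (hp : IsProperEdgeColoring GG k ψ)
    (hc : c ∈ missing GG k ψ y0) (hd : d ∈ missing GG k ψ y1) :
    (kG GG ψ c d).Reachable y0 y1 := by
  by_contra hno
  have hσp : IsProperEdgeColoring GG k (swapped GG ψ c d y0) :=
    swapped_proper hp hc.1 hd.1
  have h0 : d ∈ missing GG k (swapped GG ψ c d y0) y0 := by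
    have := missing_swapped_of_reach (SimpleGraph.Reachable.refl y0) hc.1 hd.1 hc
    rwa [sw_c] at this
  have h1 : d ∈ missing GG k (swapped GG ψ c d y0) y1 := by
    rw [missing_swapped_of_not_reach hno]
    exact hd
  exact S.hext _ hσp d h0 h1

/-- If moreover some color of the pair is missing at `y3`, then `y3` is not on
that chain. -/
lemma no_reach_y3 (S : Setup GG k y0 y1 y2 y3) (hp : IsProperEdgeColoring GG k ψ)
    (hc : c ∈ missing GG k ψ y0) (hd : d ∈ missing GG k ψ y1) {m : ℕ}
    (hm3 : m ∈ missing GG k ψ y3) (hmcd : m = c ∨ m = d) :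
    ¬ (kG GG ψ c d).Reachable y0 y3 := by
  intro hr
  exact three_pendant (deg2_kG hp)
    (nbrSub_missing hp hc.2 (Or.inl rfl))
    (nbrSub_missing hp hd.2 (Or.inr rfl))
    (nbrSub_missing hp hm3.2 hmcd)
    S.d01 S.d03 S.d13 (factP S hp hc hd) hr

/-- Lemma E: it is impossible that `ψ(e₂) ∈ missing(y0) ∩ missing(y3)` and
`ψ(e₃) ∈ missing(y1)`. -/
lemma lemE (S : Setup GG k y0 y1 y2 y3) (hp : IsProperEdgeColoring GG k ψ)
    (h2 : ψ s(y1, y2) ∈ missing GG k ψ y0)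
    (ha3 : ψ s(y1, y2) ∈ missing GG k ψ y3)
    (ht1 : ψ s(y2, y3) ∈ missing GG k ψ y1) : False := by
  set a := ψ s(y1, y2) with haa
  set t := ψ s(y2, y3) with htt
  have he2 : (kG GG ψ a t).Adj y1 y2 := ⟨S.a12, Or.inl rfl⟩
  have he3 : (kG GG ψ a t).Adj y2 y3 := ⟨S.a23, Or.inr rfl⟩
  have hr03 : (kG GG ψ a t).Reachable y0 y3 :=
    ((factP S hp h2 ht1).trans he2.reachable).trans he3.reachable
  exact no_reach_y3 S hp h2 ht1 ha3 (Or.inl rfl) hr03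

end KP

namespace KP
variable {V : Type*} [Fintype V] [DecidableEq V]
variable {GG : SimpleGraph V} {k : ℕ} {y0 y1 y2 y3 : V} {ψ : Sym2 V → ℕ} {c d : ℕ}

/-- Bundled facts about swapping the `(c,d)`-chain through `y3`, when `c ∈ missing(y0)`,
`d ∈ missing(y1)` and one of `c, d` is missing at `y3`. -/
lemma swap3 (S : Setup GG k y0 y1 y2 y3) (hp : IsProperEdgeColoring GG k ψ)
    (hc : c ∈ missing GG k ψ y0) (hd : d ∈ missing GG k ψ y1) {m : ℕ}
    (hm3 : m ∈ missing GG k ψ y3) (hmcd : m = c ∨ m = d) :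
    IsProperEdgeColoring GG k (swapped GG ψ c d y3) ∧
    missing GG k (swapped GG ψ c d y3) y0 = missing GG k ψ y0 ∧
    missing GG k (swapped GG ψ c d y3) y1 = missing GG k ψ y1 ∧
    (∀ col ∈ missing GG k ψ y3, sw c d col ∈ missing GG k (swapped GG ψ c d y3) y3) ∧
    swapped GG ψ c d y3 s(y1, y2) = ψ s(y1, y2) ∧
    (ψ s(y2, y3) = c ∨ ψ s(y2, y3) = d →
      swapped GG ψ c d y3 s(y2, y3) = sw c d (ψ s(y2, y3))) ∧
    (ψ s(y2, y3) ≠ c → ψ s(y2, y3) ≠ d →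
      swapped GG ψ c d y3 s(y2, y3) = ψ s(y2, y3)) := by
  have hnr03 : ¬ (kG GG ψ c d).Reachable y0 y3 := no_reach_y3 S hp hc hd hm3 hmcd
  have hnr30 : ¬ (kG GG ψ c d).Reachable y3 y0 := fun h => hnr03 h.symm
  have hnr31 : ¬ (kG GG ψ c d).Reachable y3 y1 :=
    fun h => hnr03 ((factP S hp hc hd).trans h.symm)
  refine ⟨swapped_proper hp hc.1 hd.1,
    missing_swapped_of_not_reach hnr30,
    missing_swapped_of_not_reach hnr31,
    fun col h => missing_swapped_of_reach (SimpleGraph.Reachable.refl y3) hc.1 hd.1 h,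
    swapped_of_not_reach hnr31, ?_, ?_⟩
  · intro hcol
    refine swapped_of_cond ⟨y3, y2, Sym2.eq_swap, ⟨S.a23.symm, ?_⟩, SimpleGraph.Reachable.refl y3⟩
    rwa [Sym2.eq_swap]
  · intro h1 h2
    exact swapped_of_color_notin h1 h2

/-- Lemma B1: impossible that `ψ(e₂) ∈ missing(y0) ∩ missing(y3)`,
`ψ(e₃) ∈ missing(y0) ∪ missing(y1)` and some `b ∈ missing(y1) ∩ missing(y3)`. -/
lemma lemB1 (S : Setup GG k y0 y1 y2 y3) (hp : IsProperEdgeColoring GG k ψ)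
    (h2 : ψ s(y1, y2) ∈ missing GG k ψ y0)
    (h3 : ψ s(y2, y3) ∈ missing GG k ψ y0 ∪ missing GG k ψ y1)
    (ha3 : ψ s(y1, y2) ∈ missing GG k ψ y3)
    {b : ℕ} (hb1 : b ∈ missing GG k ψ y1) (hb3 : b ∈ missing GG k ψ y3) : False := by
  rcases h3 with ht0 | ht1
  · -- swap the (ψ(e₃), b)-chain through y3
    obtain ⟨σp, m0, m1, m3, he2, he3sw, -⟩ := swap3 S hp ht0 hb1 hb3 (Or.inr rfl)
    have hat : ψ s(y1, y2) ≠ ψ s(y2, y3) := e2_ne_e3 S hp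
    have hab : ψ s(y1, y2) ≠ b := ne01 S hp h2 hb1
    have he3 : swapped GG ψ (ψ s(y2, y3)) b y3 s(y2, y3) = b := by
      rw [he3sw (Or.inl rfl), sw_c]
    refine lemE S σp ?_ ?_ ?_
    · rw [he2, m0]; exact h2
    · rw [he2]
      have := m3 _ ha3
      rwa [sw_other hat hab] at this
    · rw [he3, m1]; exact hb1
  · exact lemE S hp h2 ha3 ht1

/-- Lemma C1: impossible that `ψ(e₂) ∈ missing(y0) ∩ missing(y3)`,
`ψ(e₃) ∈ missing(y0) ∪ missing(y1)` and some other `β ∈ missing(y0) ∩ missing(y3)`. -/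
lemma lemC1 (S : Setup GG k y0 y1 y2 y3) (hp : IsProperEdgeColoring GG k ψ)
    (h2 : ψ s(y1, y2) ∈ missing GG k ψ y0)
    (h3 : ψ s(y2, y3) ∈ missing GG k ψ y0 ∪ missing GG k ψ y1)
    (ha3 : ψ s(y1, y2) ∈ missing GG k ψ y3)
    {β : ℕ} (hβ0 : β ∈ missing GG k ψ y0) (hβ3 : β ∈ missing GG k ψ y3)
    (hβa : β ≠ ψ s(y1, y2)) : False := by
  rcases h3 with ht0 | ht1
  · obtain ⟨δ, hδ1⟩ := S.hne1 ψ hp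
    -- swap the (β, δ)-chain through y3
    obtain ⟨σp, m0, m1, m3, he2, -, he3ns⟩ := swap3 S hp hβ0 hδ1 hβ3 (Or.inl rfl)
    have haβ : ψ s(y1, y2) ≠ β := hβa.symm
    have haδ : ψ s(y1, y2) ≠ δ := ne01 S hp h2 hδ1
    have htβ : ψ s(y2, y3) ≠ β := presentE3 S hβ3
    have htδ : ψ s(y2, y3) ≠ δ := ne01 S hp ht0 hδ1
    have he3 := he3ns htβ htδ
    refine lemB1 S σp ?_ ?_ ?_ (b := δ) ?_ ?_
    · rw [he2, m0]; exact h2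
    · rw [he3]; exact Or.inl (by rw [m0]; exact ht0)
    · rw [he2]
      have := m3 _ ha3
      rwa [sw_other haβ haδ] at this
    · rw [m1]; exact hδ1
    · have := m3 _ hβ3
      rwa [sw_c] at this
  · exact lemE S hp h2 ha3 ht1

end KP

namespace KP
variable {V : Type*} [Fintype V] [DecidableEq V]
variable {GG : SimpleGraph V} {k : ℕ} {y0 y1 y2 y3 : V} {ψ : Sym2 V → ℕ}

/-- Case: some color in `missing(y1) ∩ missing(y3)` plus another shared color. -/
lemma lemDI (S : Setup GG k y0 y1 y2 y3) (hp : IsProperEdgeColoring GG k ψ)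
    (h2 : ψ s(y1, y2) ∈ missing GG k ψ y0)
    (h3 : ψ s(y2, y3) ∈ missing GG k ψ y0 ∪ missing GG k ψ y1)
    {α β : ℕ} (hα1 : α ∈ missing GG k ψ y1) (hα3 : α ∈ missing GG k ψ y3)
    (hβ01 : β ∈ missing GG k ψ y0 ∪ missing GG k ψ y1)
    (hβ3 : β ∈ missing GG k ψ y3) (hαβ : α ≠ β) : False := by
  by_cases haβ : ψ s(y1, y2) = β
  · exact lemB1 S hp h2 h3 (by rw [haβ]; exact hβ3) hα1 hα3
  · -- swap the (ψ(e₂), α)-chain through y3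
    obtain ⟨σp, m0, m1, m3, he2, -, he3ns⟩ := swap3 S hp h2 hα1 hα3 (Or.inr rfl)
    have hta : ψ s(y2, y3) ≠ ψ s(y1, y2) := (e2_ne_e3 S hp).symm
    have htα : ψ s(y2, y3) ≠ α := presentE3 S hα3
    have haα : ψ s(y1, y2) ≠ α := ne01 S hp h2 hα1
    have he3 := he3ns hta htα
    have h2σ : swapped GG ψ (ψ s(y1, y2)) α y3 s(y1, y2) ∈
        missing GG k (swapped GG ψ (ψ s(y1, y2)) α y3) y0 := by
      rw [he2, m0]; exact h2
    have h3σ : swapped GG ψ (ψ s(y1, y2)) α y3 s(y2, y3) ∈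
        missing GG k (swapped GG ψ (ψ s(y1, y2)) α y3) y0 ∪
        missing GG k (swapped GG ψ (ψ s(y1, y2)) α y3) y1 := by
      rw [he3, m0, m1]; exact h3
    have ha3σ : swapped GG ψ (ψ s(y1, y2)) α y3 s(y1, y2) ∈
        missing GG k (swapped GG ψ (ψ s(y1, y2)) α y3) y3 := by
      rw [he2]
      have := m3 _ hα3
      rwa [sw_d] at this
    have hβ3σ : β ∈ missing GG k (swapped GG ψ (ψ s(y1, y2)) α y3) y3 := by
      have := m3 _ hβ3
      rwa [sw_other (fun h => haβ h.symm) (fun h => hαβ h.symm)] at this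
    rcases hβ01 with hβ0 | hβ1
    · refine lemC1 S σp h2σ h3σ ha3σ (β := β) ?_ hβ3σ ?_
      · rw [m0]; exact hβ0
      · rw [he2]; exact fun h => haβ h.symm
    · refine lemB1 S σp h2σ h3σ ha3σ (b := β) ?_ hβ3σ
      rw [m1]; exact hβ1

/-- Case: two colors in `missing(y0) ∩ missing(y3)`. -/
lemma lemDII (S : Setup GG k y0 y1 y2 y3) (hp : IsProperEdgeColoring GG k ψ)
    (h2 : ψ s(y1, y2) ∈ missing GG k ψ y0)
    (h3 : ψ s(y2, y3) ∈ missing GG k ψ y0 ∪ missing GG k ψ y1)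
    {α β : ℕ} (hα0 : α ∈ missing GG k ψ y0) (hα3 : α ∈ missing GG k ψ y3)
    (hβ0 : β ∈ missing GG k ψ y0) (hβ3 : β ∈ missing GG k ψ y3)
    (hαβ : α ≠ β) : False := by
  by_cases haα : ψ s(y1, y2) = α
  · refine lemC1 S hp h2 h3 (by rw [haα]; exact hα3) hβ0 hβ3 ?_
    intro h
    exact hαβ (haα.symm.trans h.symm)
  · by_cases haβ : ψ s(y1, y2) = β
    · refine lemC1 S hp h2 h3 (by rw [haβ]; exact hβ3) hα0 hα3 ?_
      intro h
      exact hαβ (h.trans haβ)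
    · obtain ⟨δ, hδ1⟩ := S.hne1 ψ hp
      -- swap the (α, δ)-chain through y3
      obtain ⟨σp, m0, m1, m3, he2, he3sw, he3ns⟩ := swap3 S hp hα0 hδ1 hα3 (Or.inl rfl)
      have htα : ψ s(y2, y3) ≠ α := presentE3 S hα3
      have haδ : ψ s(y1, y2) ≠ δ := ne01 S hp h2 hδ1
      have hβδ : β ≠ δ := ne01 S hp hβ0 hδ1
      have h2σ : swapped GG ψ α δ y3 s(y1, y2) ∈
          missing GG k (swapped GG ψ α δ y3) y0 := by rw [he2, m0]; exact h2
      have h3σ : swapped GG ψ α δ y3 s(y2, y3) ∈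
          missing GG k (swapped GG ψ α δ y3) y0 ∪
          missing GG k (swapped GG ψ α δ y3) y1 := by
        by_cases htδ : ψ s(y2, y3) = δ
        · rw [he3sw (Or.inr htδ), htδ, sw_d, m0]
          exact Or.inl hα0
        · rw [he3ns htα htδ, m0, m1]
          exact h3
      have hδ3σ : δ ∈ missing GG k (swapped GG ψ α δ y3) y3 := by
        have := m3 _ hα3
        rwa [sw_c] at this
      have hβ3σ : β ∈ missing GG k (swapped GG ψ α δ y3) y3 := by
        have := m3 _ hβ3
        rwa [sw_other hαβ.symm hβδ] at this
      refine lemDI S σp h2σ h3σ (α := δ) (β := β) ?_ hδ3σ ?_ hβ3σ hβδ.symm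
      · rw [m1]; exact hδ1
      · rw [m0]; exact Or.inl hβ0

/-- Main engine: two distinct colors in `missing(y3) ∩ (missing(y0) ∪ missing(y1))`
are impossible. -/
lemma lemD (S : Setup GG k y0 y1 y2 y3) (hp : IsProperEdgeColoring GG k ψ)
    (h2 : ψ s(y1, y2) ∈ missing GG k ψ y0)
    (h3 : ψ s(y2, y3) ∈ missing GG k ψ y0 ∪ missing GG k ψ y1)
    {α β : ℕ} (hα3 : α ∈ missing GG k ψ y3)
    (hα01 : α ∈ missing GG k ψ y0 ∪ missing GG k ψ y1)
    (hβ3 : β ∈ missing GG k ψ y3)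
    (hβ01 : β ∈ missing GG k ψ y0 ∪ missing GG k ψ y1)
    (hαβ : α ≠ β) : False := by
  rcases hα01 with hα0 | hα1
  · rcases hβ01 with hβ0 | hβ1
    · exact lemDII S hp h2 h3 hα0 hα3 hβ0 hβ3 hαβ
    · exact lemDI S hp h2 h3 hβ1 hβ3 (Or.inl hα0) hα3 hαβ.symm
  · exact lemDI S hp h2 h3 hα1 hα3 hβ01 hβ3 hαβ

end KP

/-- If `G` is Class 2 with critical edge `e₁ = y₀y₁`, `φ ∈ C^Δ(G - e₁)`,
and `K = (y₀, e₁, y₁, e₂, y₂, e₃, y₃)` is a Kierstead path with respect to `e₁` and `φ`,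
then `|φ̄(y₃) ∩ (φ̄(y₀) ∪ φ̄(y₁))| ≤ 1`. -/
theorem kierstead_path_missing_bound {V : Type*} [Fintype V] [DecidableEq V]
    (G : SimpleGraph V) [DecidableRel G.Adj]
    (hClass2 : chromIndex G = G.maxDegree + 1)
    (y0 y1 y2 y3 : V)
    (hdist : ([y0, y1, y2, y3] : List V).Pairwise (· ≠ ·))
    (h01 : G.Adj y0 y1) (h12 : G.Adj y1 y2) (h23 : G.Adj y2 y3)
    (hcritical : chromIndex (G.deleteEdges {s(y0, y1)}) < chromIndex G)
    (φ : Sym2 V → ℕ)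
    (hφ : IsProperEdgeColoring (G.deleteEdges {s(y0, y1)}) G.maxDegree φ)
    -- the Kierstead path condition K2
    (hK2 : φ s(y1, y2) ∈ missing (G.deleteEdges {s(y0, y1)}) G.maxDegree φ y0 ∪
      missing (G.deleteEdges {s(y0, y1)}) G.maxDegree φ y1)
    (hK3 : φ s(y2, y3) ∈ missing (G.deleteEdges {s(y0, y1)}) G.maxDegree φ y0 ∪
      missing (G.deleteEdges {s(y0, y1)}) G.maxDegree φ y1 ∪
      missing (G.deleteEdges {s(y0, y1)}) G.maxDegree φ y2) :
    (missing (G.deleteEdges {s(y0, y1)}) G.maxDegree φ y3 ∩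
      (missing (G.deleteEdges {s(y0, y1)}) G.maxDegree φ y0 ∪
        missing (G.deleteEdges {s(y0, y1)}) G.maxDegree φ y1)).ncard ≤ 1 := by
  classical
  simp only [List.pairwise_cons, List.mem_cons, List.mem_singleton, List.not_mem_nil,
    forall_eq_or_imp, forall_eq, List.Pairwise.nil, and_true, ne_eq, List.not_mem_nil,
    IsEmpty.forall_iff, implies_true] at hdist
  have d01 : y0 ≠ y1 := by tauto
  have d02 : y0 ≠ y2 := by tauto
  have d03 : y0 ≠ y3 := by tauto
  have d12 : y1 ≠ y2 := by tauto
  have d13 : y1 ≠ y3 := by tauto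
  have d23 : y2 ≠ y3 := by tauto
  have ha12 : (G.deleteEdges {s(y0, y1)}).Adj y1 y2 := by
    rw [SimpleGraph.deleteEdges_adj]
    refine ⟨h12, ?_⟩
    rw [Set.mem_singleton_iff]
    intro h
    rcases Sym2.eq_iff.1 h with ⟨hh1, hh2⟩ | ⟨hh1, hh2⟩
    · exact d01 hh1.symm
    · exact d02 hh2.symm
  have ha23 : (G.deleteEdges {s(y0, y1)}).Adj y2 y3 := by
    rw [SimpleGraph.deleteEdges_adj]
    refine ⟨h23, ?_⟩
    rw [Set.mem_singleton_iff]
    intro h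
    rcases Sym2.eq_iff.1 h with ⟨hh1, hh2⟩ | ⟨hh1, hh2⟩
    · exact d02 hh1.symm
    · exact d12 hh1.symm
  have hGGe : ∀ e ∈ G.edgeSet, e ≠ s(y0, y1) → e ∈ (G.deleteEdges {s(y0, y1)}).edgeSet := by
    intro e he hne
    rw [SimpleGraph.edgeSet_deleteEdges]
    exact ⟨he, by simpa using hne⟩
  -- the extension property
  have hext : ∀ ψ : Sym2 V → ℕ, IsProperEdgeColoring (G.deleteEdges {s(y0, y1)}) G.maxDegree ψ →
      ∀ c, c ∈ missing (G.deleteEdges {s(y0, y1)}) G.maxDegree ψ y0 →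
        c ∈ missing (G.deleteEdges {s(y0, y1)}) G.maxDegree ψ y1 → False := by
    intro ψ hψ cc hc0 hc1
    set χ : Sym2 V → ℕ := fun e => if e = s(y0, y1) then cc else ψ e with hχ
    have key : ∀ e₂ ∈ G.edgeSet, e₂ ≠ s(y0, y1) → (∃ v, v ∈ s(y0, y1) ∧ v ∈ e₂) →
        ψ e₂ ≠ cc := by
      intro e₂ he₂ h2 ⟨v, hv1, hv2⟩
      obtain ⟨w, rfl⟩ := Sym2.mem_iff_exists.1 hv2
      have hadj : (G.deleteEdges {s(y0, y1)}).Adj v w :=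
        (SimpleGraph.mem_edgeSet _).1 (hGGe _ he₂ h2)
      rcases Sym2.mem_iff.1 hv1 with rfl | rfl
      · exact hc0.2 w hadj
      · exact hc1.2 w hadj
    have hprop : IsProperEdgeColoring G G.maxDegree χ := by
      constructor
      · intro e he
        by_cases h : e = s(y0, y1)
        · simp only [hχ, if_pos h]
          exact hc0.1
        · simp only [hχ, if_neg h]
          exact hψ.1 e (hGGe e he h)
      · intro e₁ he₁ e₂ he₂ hne hsh
        by_cases h1 : e₁ = s(y0, y1) <;> by_cases h2 : e₂ = s(y0, y1)
        · exact absurd (h1.trans h2.symm) hne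
        · simp only [hχ, if_pos h1, if_neg h2]
          subst h1
          exact (key e₂ he₂ h2 hsh).symm
        · simp only [hχ, if_neg h1, if_pos h2]
          subst h2
          obtain ⟨v, hv1, hv2⟩ := hsh
          exact key e₁ he₁ h1 ⟨v, hv2, hv1⟩
        · simp only [hχ, if_neg h1, if_neg h2]
          exact hψ.2 e₁ (hGGe _ he₁ h1) e₂ (hGGe _ he₂ h2) hne hsh
    have hle : chromIndex G ≤ G.maxDegree := Nat.sInf_le ⟨χ, hprop⟩
    omega
  -- nonempty missing set at y1
  have hne1 : ∀ ψ : Sym2 V → ℕ, IsProperEdgeColoring (G.deleteEdges {s(y0, y1)}) G.maxDegree ψ →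
      ∃ δ, δ ∈ missing (G.deleteEdges {s(y0, y1)}) G.maxDegree ψ y1 := by
    intro ψ hψ
    have hy0 : y0 ∈ G.neighborFinset y1 := by
      rw [SimpleGraph.mem_neighborFinset]
      exact h01.symm
    set T := ((G.neighborFinset y1).erase y0).image (fun w => ψ s(y1, w)) with hT
    have h1 := Finset.card_image_le (s := (G.neighborFinset y1).erase y0)
      (f := fun w => ψ s(y1, w))
    have h2 := Finset.card_erase_of_mem hy0
    have h3 : (G.neighborFinset y1).card = G.degree y1 := rfl
    have h4 := G.degree_le_maxDegree y1
    have h5 : 0 < (G.neighborFinset y1).card := Finset.card_pos.2 ⟨y0, hy0⟩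
    have hTcard : T.card < G.maxDegree := by rw [hT]; omega
    have hns : ¬ (Finset.Icc 1 G.maxDegree ⊆ T) := by
      intro h
      have := Finset.card_le_card h
      rw [Nat.card_Icc] at this
      omega
    obtain ⟨δ, hδI, hδT⟩ := Finset.not_subset.1 hns
    refine ⟨δ, hδI, ?_⟩
    intro v hv heq
    apply hδT
    have hvm : v ∈ (G.neighborFinset y1).erase y0 := by
      rw [Finset.mem_erase]
      constructor
      · rintro rfl
        refine (SimpleGraph.deleteEdges_adj.1 hv).2 ?_
        rw [Sym2.eq_swap]
        rfl
      · rw [SimpleGraph.mem_neighborFinset]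
        exact (SimpleGraph.deleteEdges_adj.1 hv).1
    exact Finset.mem_image.2 ⟨v, hvm, heq⟩
  have S : KP.Setup (G.deleteEdges {s(y0, y1)}) G.maxDegree y0 y1 y2 y3 :=
    ⟨d01, d02, d03, d12, d13, d23, ha12, ha23, hext, hne1⟩
  -- the Kierstead conditions give ψ(e₂) ∈ missing(y0) and ψ(e₃) ∈ missing(y0) ∪ missing(y1)
  have h2' : φ s(y1, y2) ∈ missing (G.deleteEdges {s(y0, y1)}) G.maxDegree φ y0 := by
    rcases hK2 with h | h
    · exact h
    · exact absurd rfl (h.2 y2 ha12)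
  have h3' : φ s(y2, y3) ∈ missing (G.deleteEdges {s(y0, y1)}) G.maxDegree φ y0 ∪
      missing (G.deleteEdges {s(y0, y1)}) G.maxDegree φ y1 := by
    rcases hK3 with h | h
    · exact h
    · exact absurd rfl (h.2 y3 ha23)
  -- conclude
  by_contra hcon
  push_neg at hcon
  have hfin : (missing (G.deleteEdges {s(y0, y1)}) G.maxDegree φ y3 ∩
      (missing (G.deleteEdges {s(y0, y1)}) G.maxDegree φ y0 ∪
        missing (G.deleteEdges {s(y0, y1)}) G.maxDegree φ y1)).Finite := by
    apply Set.Finite.subset (Finset.Icc 1 G.maxDegree).finite_toSet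
    intro x hx
    exact hx.1.1
  rw [Set.one_lt_ncard_iff hfin] at hcon
  obtain ⟨α, β, hα, hβ, hαβ⟩ := hcon
  exact KP.lemD S hφ h2' h3' hα.1 hα.2 hβ.1 hβ.2 hαβ
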